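/- Let κ be semi-separable: δ·ν(ω)·k₀(x) ≤ κ(ω,x) ≤ ν(ω)·k₀(x) for some δ ∈ (0,1], nonzero k₀ ∈ M^b₊(Ω), nonzero finite measure ν. Then the spectral radius R₀ of the induced operator K satisfies δ·∫_Ω k₀ dν ≤ R₀ ≤ ∫_Ω k₀ dν; in particular R₀ > 0 if and only if ∫_Ω k₀ dν > 0. -/

import Mathlib

set_option maxHeartbeats 1000000
set_option synthInstance.maxHeartbeats 400000

open MeasureTheory Filter
open scoped ENNReal NNReal

section PosOp
variable {E : Type*} [NormedAddCommGroup E] [NormedSpace ℝ E] [CompleteSpace E] {ι : Type*}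

/-- positivity of an operator w.r.t. a family of "evaluation" functionals -/
def PosOpE (ev : ι → E →L[ℝ] ℝ) (T : E →L[ℝ] E) : Prop :=
  ∀ g : E, (∀ i, 0 ≤ ev i g) → ∀ i, 0 ≤ ev i (T g)

variable {ev : ι → E →L[ℝ] ℝ}

theorem posOpE_one : PosOpE ev (1 : E →L[ℝ] E) := fun _ hg => hg

theorem posOpE_zero : PosOpE ev (0 : E →L[ℝ] E) := by
  intro g hg i
  simp

theorem PosOpE.mul {S T : E →L[ℝ] E} (hS : PosOpE ev S) (hT : PosOpE ev T) :
    PosOpE ev (S * T) :=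
  fun g hg => hS (T g) (hT g hg)

theorem PosOpE.add {S T : E →L[ℝ] E} (hS : PosOpE ev S) (hT : PosOpE ev T) :
    PosOpE ev (S + T) := by
  intro g hg i
  have h1 := hS g hg i
  have h2 := hT g hg i
  simp only [ContinuousLinearMap.add_apply, map_add]
  linarith

theorem PosOpE.smul {T : E →L[ℝ] E} (hT : PosOpE ev T) {c : ℝ} (hc : 0 ≤ c) :
    PosOpE ev (c • T) := by
  intro g hg i
  simp only [ContinuousLinearMap.smul_apply, _root_.map_smul, smul_eq_mul]
  exact mul_nonneg hc (hT g hg i)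

theorem PosOpE.pow {T : E →L[ℝ] E} (hT : PosOpE ev T) (n : ℕ) : PosOpE ev (T ^ n) := by
  induction n with
  | zero => simpa using posOpE_one
  | succ n ih => rw [pow_succ]; exact ih.mul hT

theorem posOpE_sum {α : Type*} (s : Finset α) {F : α → E →L[ℝ] E}
    (hF : ∀ j ∈ s, PosOpE ev (F j)) : PosOpE ev (∑ j ∈ s, F j) := by
  classical
  induction s using Finset.induction_on with
  | empty => simpa using posOpE_zero
  | insert _ _ hx ih =>
    rw [Finset.sum_insert hx]
    exact (hF _ (Finset.mem_insert_self _ _)).add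
      (ih fun j hj => hF j (Finset.mem_insert_of_mem hj))

theorem posOpE_of_tendsto {F : ℕ → E →L[ℝ] E} {T : E →L[ℝ] E}
    (hFT : Tendsto F atTop (nhds T)) (hF : ∀ n, PosOpE ev (F n)) : PosOpE ev T := by
  intro g hg i
  have h1 : Tendsto (fun n => ev i ((F n) g)) atTop (nhds (ev i (T g))) := by
    have h2 : Continuous fun (A : E →L[ℝ] E) => ev i (A g) :=
      (ev i).continuous.comp (ContinuousLinearMap.apply ℝ E g).continuous
    exact (h2.tendsto T).comp hFT
  exact ge_of_tendsto' h1 (fun n => hF n g hg i)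

theorem posOpE_tsum {F : ℕ → E →L[ℝ] E} (hsum : Summable F) (hF : ∀ n, PosOpE ev (F n)) :
    PosOpE ev (∑' n, F n) := by
  refine posOpE_of_tendsto (hsum.hasSum.tendsto_sum_nat) fun n => ?_
  exact posOpE_sum _ fun j _ => hF j

end PosOp
section Key
variable {E : Type*} [NormedAddCommGroup E] [NormedSpace ℝ E] [CompleteSpace E] {ι : Type*}

theorem keyLower (ev : ι → E →L[ℝ] ℝ) (T : E →L[ℝ] E) (hT : PosOpE ev T)
    (k : E) (hknn : ∀ i, 0 ≤ ev i k) (i₀ : ι) (hi₀ : 0 < ev i₀ k)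
    (c : ℝ) (hTk : ∀ i, c * ev i k ≤ ev i (T k))
    (hunit : ∀ μ : ℝ, c ≤ μ → IsUnit (algebraMap ℝ (E →L[ℝ] E) μ - T)) : False := by
  haveI hntE : Nontrivial E := by
    refine ⟨k, 0, fun h => ?_⟩
    rw [h] at hi₀
    simp at hi₀
  haveI hTower : IsScalarTower ℝ (E →L[ℝ] E) (E →L[ℝ] E) := by
    refine ⟨fun r x y => ?_⟩
    ext g
    rfl
  haveI hComm : SMulCommClass ℝ (E →L[ℝ] E) (E →L[ℝ] E) := by
    refine ⟨fun r x y => ?_⟩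
    show r • (x * y) = x * (r • y)
    ext g
    show r • (x (y g)) = x (r • (y g))
    rw [_root_.map_smul]
  set f : ℝ → (E →L[ℝ] E) := fun μ => algebraMap ℝ _ μ - T with hfdef
  have hf : ∀ μ : ℝ, f μ = μ • 1 - T := by
    intro μ; rw [hfdef]; simp [Algebra.algebraMap_eq_smul_one]
  set inv : ℝ → (E →L[ℝ] E) := fun μ => Ring.inverse (f μ) with hinvdef
  -- Neumann series positivity
  have neumann : ∀ μ : ℝ, ‖T‖ < μ → PosOpE ev (inv μ) := by
    intro μ hμ
    have hμ0 : 0 < μ := lt_of_le_of_lt (norm_nonneg T) hμ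
    have h1 : ‖μ⁻¹ • T‖ < 1 := by
      refine lt_of_le_of_lt (ContinuousLinearMap.opNorm_smul_le _ _) ?_
      rw [norm_inv, Real.norm_of_nonneg hμ0.le]
      calc μ⁻¹ * ‖T‖ < μ⁻¹ * μ := mul_lt_mul_of_pos_left hμ (inv_pos.2 hμ0)
        _ = 1 := inv_mul_cancel₀ hμ0.ne'
    set S := μ⁻¹ • T with hS
    have hfμ : f μ = μ • (1 - S) := by
      rw [hf, smul_sub, hS, smul_smul, mul_inv_cancel₀ hμ0.ne', one_smul]
    set W := ∑' n : ℕ, S ^ n with hW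
    have hval : f μ * (μ⁻¹ • W) = 1 := by
      rw [hfμ, smul_mul_smul_comm, mul_inv_cancel₀ hμ0.ne', mul_neg_geom_series S h1, one_smul]
    have hvalinv : (μ⁻¹ • W) * f μ = 1 := by
      rw [hfμ, smul_mul_smul_comm, inv_mul_cancel₀ hμ0.ne', geom_series_mul_neg S h1, one_smul]
    have hu : IsUnit (f μ) := ⟨⟨f μ, μ⁻¹ • W, hval, hvalinv⟩, rfl⟩
    have hinvμ : inv μ = μ⁻¹ • W := by
      calc inv μ = inv μ * (f μ * (μ⁻¹ • W)) := by rw [hval, mul_one]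
        _ = (inv μ * f μ) * (μ⁻¹ • W) := by rw [mul_assoc]
        _ = μ⁻¹ • W := by
            rw [show inv μ * f μ = 1 from Ring.inverse_mul_cancel _ hu, one_mul]
    rw [hinvμ, hW]
    have hSpos : PosOpE ev S := hT.smul (inv_nonneg.2 hμ0.le)
    have h5 : PosOpE ev (∑' n : ℕ, S ^ n) :=
      posOpE_tsum (F := fun n : ℕ => S ^ n) (summable_geometric_of_norm_lt_one h1)
        (fun n => hSpos.pow n)
    exact h5.smul (inv_nonneg.2 hμ0.le)
  -- continuity of the resolvent on [c, ∞)
  have hcont : ∀ μ : ℝ, c ≤ μ → ContinuousAt inv μ := by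
    intro μ hμ
    have h1 : ContinuousAt Ring.inverse (f μ) := by
      have h3 : f μ = ((hunit μ hμ).unit : _) := ((hunit μ hμ).unit_spec).symm
      rw [h3]
      exact NormedRing.inverse_continuousAt _
    have h2 : Continuous f := (continuous_algebraMap ℝ _).sub continuous_const
    exact h1.comp h2.continuousAt
  set B : Set ℝ := {μ | c ≤ μ ∧ ∀ ξ : ℝ, μ ≤ ξ → PosOpE ev (inv ξ)} with hB
  have hBne : (max c (‖T‖ + 1)) ∈ B := by
    refine ⟨le_max_left _ _, fun ξ hξ => neumann ξ ?_⟩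
    have := le_max_right c (‖T‖ + 1)
    linarith
  have hbdd : BddBelow B := ⟨c, fun b hb => hb.1⟩
  set m := sInf B with hm
  have hmc : c ≤ m := le_csInf ⟨_, hBne⟩ fun b hb => hb.1
  have hgt : ∀ ξ : ℝ, m < ξ → PosOpE ev (inv ξ) := by
    intro ξ hξ
    obtain ⟨b, hbB, hbξ⟩ := exists_lt_of_csInf_lt ⟨_, hBne⟩ hξ
    exact hbB.2 ξ hbξ.le
  have hmP : PosOpE ev (inv m) := by
    refine posOpE_of_tendsto (F := fun n : ℕ => inv (m + ((n : ℝ) + 1)⁻¹)) ?_ ?_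
    · have h1 : Tendsto (fun n : ℕ => m + ((n : ℝ) + 1)⁻¹) atTop (nhds m) := by
        have h2 := tendsto_one_div_add_atTop_nhds_zero_nat (𝕜 := ℝ)
        simp only [one_div] at h2
        simpa using tendsto_const_nhds.add h2
      exact ((hcont m hmc).tendsto).comp h1
    · intro n
      refine hgt _ ?_
      have : (0:ℝ) < ((n : ℝ) + 1)⁻¹ := by positivity
      linarith
  have hgeP : ∀ ξ : ℝ, m ≤ ξ → PosOpE ev (inv ξ) := by
    intro ξ hξ
    rcases eq_or_lt_of_le hξ with h | h
    · rw [← h]; exact hmP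
    · exact hgt ξ h
  have hmeq : m = c := by
    by_contra hne
    have hcm : c < m := lt_of_le_of_ne hmc (Ne.symm hne)
    have hUm := hunit m hmc
    have hmul1 : f m * inv m = 1 := Ring.mul_inverse_cancel _ hUm
    have hmul2 : inv m * f m = 1 := Ring.inverse_mul_cancel _ hUm
    have hR0pos : 0 < ‖inv m‖ := by
      rw [norm_pos_iff]
      intro h0
      rw [h0, zero_mul] at hmul2
      exact one_ne_zero hmul2.symm
    set ε := min ‖inv m‖⁻¹ (m - c) with hε
    have hε0 : 0 < ε := lt_min (inv_pos.2 hR0pos) (by linarith)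
    have hmem : m - ε / 2 ∈ B := by
      constructor
      · have h1 : ε ≤ m - c := min_le_right _ _
        linarith
      · intro ξ hξ
        rcases le_or_gt m ξ with h | h
        · exact hgeP ξ h
        · set t := m - ξ with ht
          have ht0 : 0 ≤ t := by rw [ht]; linarith
          have htlt : t * ‖inv m‖ < 1 := by
            have h1 : t ≤ ε / 2 := by rw [ht]; linarith
            have h2 : ε ≤ ‖inv m‖⁻¹ := min_le_left _ _
            have h3 : t < ‖inv m‖⁻¹ := by linarith
            calc t * ‖inv m‖ < ‖inv m‖⁻¹ * ‖inv m‖ := by nlinarith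
              _ = 1 := inv_mul_cancel₀ hR0pos.ne'
          have hnS : ‖t • inv m‖ < 1 := by
            refine lt_of_le_of_lt (ContinuousLinearMap.opNorm_smul_le _ _) ?_
            rw [Real.norm_of_nonneg ht0]; exact htlt
          have hfξ : f ξ = f m * (1 - t • inv m) := by
            rw [mul_sub, mul_one, mul_smul_comm, hmul1, hf, hf, ht, sub_smul]
            abel
          set W := ∑' n : ℕ, (t • inv m) ^ n with hW
          have hWun : (1 - t • inv m) * W = 1 := mul_neg_geom_series _ hnS
          have hWun' : W * (1 - t • inv m) = 1 := geom_series_mul_neg _ hnS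
          have hval : f ξ * (W * inv m) = 1 := by
            rw [hfξ, mul_assoc, ← mul_assoc (1 - t • inv m) W (inv m), hWun, one_mul, hmul1]
          have hvalinv : (W * inv m) * f ξ = 1 := by
            rw [hfξ, mul_assoc, ← mul_assoc (inv m) (f m) _, hmul2, one_mul, hWun']
          have hu : IsUnit (f ξ) := ⟨⟨f ξ, W * inv m, hval, hvalinv⟩, rfl⟩
          have hinvξ : inv ξ = W * inv m := by
            calc inv ξ = inv ξ * (f ξ * (W * inv m)) := by rw [hval, mul_one]
              _ = (inv ξ * f ξ) * (W * inv m) := by rw [mul_assoc]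
              _ = W * inv m := by
                  rw [show inv ξ * f ξ = 1 from Ring.inverse_mul_cancel _ hu, one_mul]
          rw [hinvξ, hW]
          have hSpos : PosOpE ev (t • inv m) := hmP.smul ht0
          have h5 : PosOpE ev (∑' n : ℕ, (t • inv m) ^ n) :=
            posOpE_tsum (F := fun n : ℕ => (t • inv m) ^ n)
              (summable_geometric_of_norm_lt_one hnS) (fun n => hSpos.pow n)
          exact h5.mul hmP
    have h2 := csInf_le hbdd hmem
    rw [← hm] at h2
    linarith
  have hcP : PosOpE ev (inv c) := by rw [← hmeq]; exact hmP
  have hUc := hunit c le_rfl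
  have h1 : inv c * f c = 1 := Ring.inverse_mul_cancel _ hUc
  have hk1 : (inv c) ((f c) k) = k := by
    have h2 := congrArg (fun (A : E →L[ℝ] E) => A k) h1
    simpa [ContinuousLinearMap.mul_apply] using h2
  have hfck : ∀ i, ev i ((f c) k) = -(ev i (T k) - c * ev i k) := by
    intro i
    rw [hf]
    simp only [ContinuousLinearMap.sub_apply, ContinuousLinearMap.smul_apply,
      ContinuousLinearMap.one_apply, map_sub, _root_.map_smul, smul_eq_mul]
    ring
  have hynn : ∀ i, 0 ≤ ev i (T k - c • k) := by
    intro i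
    rw [map_sub, _root_.map_smul]
    have := hTk i
    simp only [smul_eq_mul]
    linarith
  have hfck2 : (f c) k = -(T k - c • k) := by
    rw [hf]
    simp only [ContinuousLinearMap.sub_apply, ContinuousLinearMap.smul_apply,
      ContinuousLinearMap.one_apply]
    abel
  have hk2 : ev i₀ k ≤ 0 := by
    have h2 : 0 ≤ ev i₀ ((inv c) (T k - c • k)) := hcP _ hynn i₀
    have h3 : ev i₀ k = -(ev i₀ ((inv c) (T k - c • k))) := by
      conv_lhs => rw [← hk1, hfck2, map_neg, map_neg]
    rw [h3]
    linarith
  exact absurd hk2 (not_le.2 hi₀)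

end Key
/-- For a semi-separable measure kernel (δ·ν(ω)·k₀(x) ≤ κ(ω,x) ≤ ν(ω)·k₀(x)),
the spectral radius R₀ of the induced next generation operator K on ℓ∞(Ω)
satisfies δ·∫ k₀ dν ≤ R₀ ≤ ∫ k₀ dν; in particular R₀ > 0 iff ∫ k₀ dν > 0. -/
theorem stmt8 {Ω : Type*} [MeasurableSpace Ω]
    (κ : Ω → Measure Ω) [∀ x, IsFiniteMeasure (κ x)]
    (ν : Measure Ω) [IsFiniteMeasure ν] (hν : ν ≠ 0)
    (k0 : Ω → ℝ) (hk0m : Measurable k0) (hk0nn : ∀ x, 0 ≤ k0 x)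
    (hk0b : ∃ C, ∀ x, k0 x ≤ C) (hk0ne : k0 ≠ 0)
    (δ : ℝ) (hδ0 : 0 < δ) (hδ1 : δ ≤ 1)
    (hsep : ∀ s : Set Ω, MeasurableSet s → ∀ x,
      δ * (ν s).toReal * k0 x ≤ (κ x s).toReal ∧ (κ x s).toReal ≤ (ν s).toReal * k0 x)
    (K : lp (fun _ : Ω => ℝ) ⊤ →L[ℝ] lp (fun _ : Ω => ℝ) ⊤)
    (hK : ∀ g : lp (fun _ : Ω => ℝ) ⊤, ∀ x : Ω,
      (K g : ∀ _ : Ω, ℝ) x = ∫ ξ, (g : ∀ _ : Ω, ℝ) ξ ∂ κ x) :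
    ENNReal.ofReal (δ * ∫ x, k0 x ∂ν) ≤ spectralRadius ℝ K ∧
    spectralRadius ℝ K ≤ ENNReal.ofReal (∫ x, k0 x ∂ν) ∧
    (0 < spectralRadius ℝ K ↔ 0 < ∫ x, k0 x ∂ν) := by
  classical
  set I : ℝ := ∫ x, k0 x ∂ν with hIdef
  obtain ⟨x₀, hx₀ne⟩ : ∃ x, k0 x ≠ 0 := Function.ne_iff.mp hk0ne
  have hx₀ : 0 < k0 x₀ := lt_of_le_of_ne (hk0nn x₀) (Ne.symm hx₀ne)
  haveI : Nonempty Ω := ⟨x₀⟩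
  obtain ⟨C, hC⟩ := hk0b
  have hC0 : 0 < C := lt_of_lt_of_le hx₀ (hC x₀)
  have hInn : 0 ≤ I := integral_nonneg hk0nn
  have hνU : (0:ℝ) ≤ (ν Set.univ).toReal := ENNReal.toReal_nonneg
  -- integrability of k0
  have hint : ∀ (μ : Measure Ω) [IsFiniteMeasure μ], Integrable k0 μ := by
    intro μ hμ
    refine ⟨hk0m.aestronglyMeasurable, ?_⟩
    refine HasFiniteIntegral.of_bounded (C := C) (ae_of_all _ fun x => ?_)
    rw [Real.norm_of_nonneg (hk0nn x)]
    exact hC x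
  -- k0 as an element of ℓ∞
  have hmem : Memℓp k0 (⊤ : ℝ≥0∞) := by
    refine memℓp_infty ⟨C, ?_⟩
    rintro r ⟨x, rfl⟩
    show ‖k0 x‖ ≤ C
    rw [Real.norm_of_nonneg (hk0nn x)]
    exact hC x
  set k := (⟨k0, hmem⟩ : lp (fun _ : Ω => ℝ) ⊤) with hkdef
  have hkco : ∀ x, (k : ∀ _ : Ω, ℝ) x = k0 x := fun _ => rfl
  -- measure comparison
  have hle1 : ∀ x, (ENNReal.ofReal (δ * k0 x)) • ν ≤ κ x := by
    intro x
    rw [Measure.le_iff]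
    intro s hs
    rw [Measure.smul_apply, smul_eq_mul]
    have h1 := (hsep s hs x).1
    have h2 : ENNReal.ofReal (δ * k0 x) * ν s
        = ENNReal.ofReal (δ * k0 x * (ν s).toReal) := by
      rw [← ENNReal.ofReal_toReal (measure_ne_top ν s),
        ← ENNReal.ofReal_mul (mul_nonneg hδ0.le (hk0nn x)), ENNReal.ofReal_toReal
          (measure_ne_top ν s)]
    rw [h2, ← ENNReal.ofReal_toReal (measure_ne_top (κ x) s)]
    refine ENNReal.ofReal_le_ofReal ?_
    calc δ * k0 x * (ν s).toReal = δ * (ν s).toReal * k0 x := by ring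
      _ ≤ (κ x s).toReal := h1
  have hle2 : ∀ x, κ x ≤ (ENNReal.ofReal (k0 x)) • ν := by
    intro x
    rw [Measure.le_iff]
    intro s hs
    rw [Measure.smul_apply, smul_eq_mul]
    have h1 := (hsep s hs x).2
    have h2 : ENNReal.ofReal (k0 x) * ν s = ENNReal.ofReal (k0 x * (ν s).toReal) := by
      rw [← ENNReal.ofReal_toReal (measure_ne_top ν s), ← ENNReal.ofReal_mul (hk0nn x),
        ENNReal.ofReal_toReal (measure_ne_top ν s)]
    rw [h2, ← ENNReal.ofReal_toReal (measure_ne_top (κ x) s)]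
    refine ENNReal.ofReal_le_ofReal ?_
    calc (κ x s).toReal ≤ (ν s).toReal * k0 x := h1
      _ = k0 x * (ν s).toReal := by ring
  -- pointwise comparison of ∫ k0 ∂κ x
  have hKk_lower : ∀ x, (δ * I) * k0 x ≤ ∫ ξ, k0 ξ ∂κ x := by
    intro x
    have h1 : ∫ ξ, k0 ξ ∂((ENNReal.ofReal (δ * k0 x)) • ν) ≤ ∫ ξ, k0 ξ ∂κ x :=
      integral_mono_measure (hle1 x) (ae_of_all _ hk0nn) (hint (κ x))
    rw [integral_smul_measure, ENNReal.toReal_ofReal (mul_nonneg hδ0.le (hk0nn x)), smul_eq_mul] at h1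
    calc (δ * I) * k0 x = δ * k0 x * I := by ring
      _ ≤ _ := h1
  have hKk_upper : ∀ x, ∫ ξ, k0 ξ ∂κ x ≤ k0 x * I := by
    intro x
    have h1 : ∫ ξ, k0 ξ ∂κ x ≤ ∫ ξ, k0 ξ ∂((ENNReal.ofReal (k0 x)) • ν) :=
      integral_mono_measure (hle2 x) (ae_of_all _ hk0nn)
        ((hint ν).smul_measure ENNReal.ofReal_ne_top)
    rw [integral_smul_measure, ENNReal.toReal_ofReal (hk0nn x), smul_eq_mul] at h1
    exact h1
  -- evaluation functionals on ℓ∞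
  set ev : Ω → (lp (fun _ : Ω => ℝ) ⊤ →L[ℝ] ℝ) := fun x =>
    LinearMap.mkContinuous
      { toFun := fun g => (g : ∀ _ : Ω, ℝ) x
        map_add' := fun g h => by
          show ((g + h : lp (fun _ : Ω => ℝ) ⊤) : ∀ _ : Ω, ℝ) x
            = (g : ∀ _ : Ω, ℝ) x + (h : ∀ _ : Ω, ℝ) x
          rw [lp.coeFn_add]
          rfl
        map_smul' := fun c g => by
          show ((c • g : lp (fun _ : Ω => ℝ) ⊤) : ∀ _ : Ω, ℝ) x = c * (g : ∀ _ : Ω, ℝ) x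
          rw [lp.coeFn_smul]
          rfl }
      1 (fun g => by
        rw [one_mul]
        exact lp.norm_apply_le_norm ENNReal.top_ne_zero g x) with hevdef
  have hev : ∀ x (g : lp (fun _ : Ω => ℝ) ⊤), ev x g = (g : ∀ _ : Ω, ℝ) x := fun _ _ => rfl
  -- positivity of K
  have hKposE : PosOpE ev K := by
    intro g hg x
    rw [hev, hK g x]
    refine integral_nonneg fun ξ => ?_
    have := hg ξ
    rw [hev] at this
    exact this
  have hknnE : ∀ x, 0 ≤ ev x k := fun x => by rw [hev, hkco]; exact hk0nn x
  have hx₀E : 0 < ev x₀ k := by rw [hev, hkco]; exact hx₀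
  have hTkE : ∀ x, (δ * I) * ev x k ≤ ev x (K k) := by
    intro x
    rw [hev, hev, hK k x]
    have h1 : ∫ ξ, (k : ∀ _ : Ω, ℝ) ξ ∂κ x = ∫ ξ, k0 ξ ∂κ x := rfl
    rw [h1, hkco]
    exact hKk_lower x
  -- norm bound on iterates
  have hiter : ∀ n : ℕ, ∀ g : lp (fun _ : Ω => ℝ) ⊤, ∀ x : Ω,
      |((K ^ (n+1)) g : ∀ _ : Ω, ℝ) x| ≤ ‖g‖ * (ν Set.univ).toReal * I ^ n * k0 x := by
    intro n
    induction n with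
    | zero =>
      intro g x
      rw [pow_one, hK g x]
      have h1 : ‖∫ ξ, (g : ∀ _ : Ω, ℝ) ξ ∂κ x‖ ≤ ‖g‖ * (κ x Set.univ).toReal := by
        refine norm_integral_le_of_norm_le_const (ae_of_all _ fun ξ => ?_)
        exact lp.norm_apply_le_norm ENNReal.top_ne_zero g ξ
      rw [Real.norm_eq_abs] at h1
      have h2 := (hsep Set.univ MeasurableSet.univ x).2
      calc |∫ ξ, (g : ∀ _ : Ω, ℝ) ξ ∂κ x| ≤ ‖g‖ * (κ x Set.univ).toReal := h1
        _ ≤ ‖g‖ * ((ν Set.univ).toReal * k0 x) :=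
            mul_le_mul_of_nonneg_left h2 (norm_nonneg g)
        _ = ‖g‖ * (ν Set.univ).toReal * I ^ 0 * k0 x := by ring
    | succ n ih =>
      intro g x
      have hKpow : ((K ^ (n+2)) g : ∀ _ : Ω, ℝ) x = (K ((K ^ (n+1)) g) : ∀ _ : Ω, ℝ) x := by
        rw [pow_succ']
        rfl
      rw [hKpow, hK _ x]
      set h := (K ^ (n+1)) g with hhdef
      set B := ‖g‖ * (ν Set.univ).toReal * I ^ n with hB
      have hB0 : 0 ≤ B := by
        rw [hB]
        exact mul_nonneg (mul_nonneg (norm_nonneg g) hνU) (pow_nonneg hInn n)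
      have h3 : |∫ ξ, (h : ∀ _ : Ω, ℝ) ξ ∂κ x| ≤ ∫ ξ, |(h : ∀ _ : Ω, ℝ) ξ| ∂κ x := by
        have := norm_integral_le_integral_norm (μ := κ x) (fun ξ => (h : ∀ _ : Ω, ℝ) ξ)
        simpa [Real.norm_eq_abs] using this
      have h4 : ∫ ξ, |(h : ∀ _ : Ω, ℝ) ξ| ∂κ x ≤ ∫ ξ, B * k0 ξ ∂κ x := by
        refine integral_mono_of_nonneg (ae_of_all _ fun ξ => abs_nonneg _)
          ((hint (κ x)).const_mul B) (ae_of_all _ fun ξ => ?_)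
        exact ih g ξ
      have h5 : ∫ ξ, B * k0 ξ ∂κ x = B * ∫ ξ, k0 ξ ∂κ x := integral_const_mul B k0
      have h6 : B * ∫ ξ, k0 ξ ∂κ x ≤ B * (k0 x * I) :=
        mul_le_mul_of_nonneg_left (hKk_upper x) hB0
      calc |∫ ξ, (h : ∀ _ : Ω, ℝ) ξ ∂κ x| ≤ ∫ ξ, |(h : ∀ _ : Ω, ℝ) ξ| ∂κ x := h3
        _ ≤ ∫ ξ, B * k0 ξ ∂κ x := h4
        _ = B * ∫ ξ, k0 ξ ∂κ x := h5
        _ ≤ B * (k0 x * I) := h6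
        _ = ‖g‖ * (ν Set.univ).toReal * I ^ (n+1) * k0 x := by rw [hB]; ring
  have hnorm : ∀ n : ℕ, ‖(K ^ (n+1) : lp (fun _ : Ω => ℝ) ⊤ →L[ℝ] lp (fun _ : Ω => ℝ) ⊤)‖
      ≤ (ν Set.univ).toReal * C * I ^ n := by
    intro n
    have hbnd : (0:ℝ) ≤ (ν Set.univ).toReal * C * I ^ n :=
      mul_nonneg (mul_nonneg hνU hC0.le) (pow_nonneg hInn n)
    refine ContinuousLinearMap.opNorm_le_bound _ hbnd fun g => ?_
    refine lp.norm_le_of_forall_le (mul_nonneg hbnd (norm_nonneg g)) fun x => ?_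
    rw [Real.norm_eq_abs]
    have h1 := hiter n g x
    have hIn : (0:ℝ) ≤ I ^ n := pow_nonneg hInn n
    calc |((K ^ (n+1)) g : ∀ _ : Ω, ℝ) x| ≤ ‖g‖ * (ν Set.univ).toReal * I ^ n * k0 x := h1
      _ ≤ ‖g‖ * (ν Set.univ).toReal * I ^ n * C := by
          exact mul_le_mul_of_nonneg_left (hC x)
            (mul_nonneg (mul_nonneg (norm_nonneg g) hνU) (pow_nonneg hInn n))
      _ = (ν Set.univ).toReal * C * I ^ n * ‖g‖ := by ring
  -- nontriviality & norm of 1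
  haveI hntE : Nontrivial (lp (fun _ : Ω => ℝ) ⊤) := by
    refine ⟨k, 0, fun hk0' => ?_⟩
    have h1 : (k : ∀ _ : Ω, ℝ) x₀ = 0 := by rw [hk0', lp.coeFn_zero]; rfl
    rw [hkco] at h1
    exact hx₀ne h1
  have hone : ‖(1 : lp (fun _ : Ω => ℝ) ⊤ →L[ℝ] lp (fun _ : Ω => ℝ) ⊤)‖ = 1 := by
    rw [ContinuousLinearMap.one_def]
    exact ContinuousLinearMap.norm_id
  -- per-n spectral radius bound
  have hr_le : ∀ n : ℕ, spectralRadius ℝ K ^ (n+1)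
      ≤ ENNReal.ofReal ((ν Set.univ).toReal * C * I ^ n) := by
    intro n
    have h1 := spectrum.spectralRadius_le_pow_nnnorm_pow_one_div ℝ K n
    have hone' : (‖(1 : lp (fun _ : Ω => ℝ) ⊤ →L[ℝ] lp (fun _ : Ω => ℝ) ⊤)‖₊ : ℝ≥0∞) = 1 := by
      rw [← enorm_eq_nnnorm, ← ofReal_norm, hone, ENNReal.ofReal_one]
    rw [hone', ENNReal.one_rpow, mul_one] at h1
    have h2 : spectralRadius ℝ K ^ (n+1)
        ≤ ((‖K ^ (n+1)‖₊ : ℝ≥0∞) ^ ((1:ℝ) / (n+1))) ^ (n+1) :=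
      pow_le_pow_left₀ zero_le h1 (n+1)
    have h3 : ((‖K ^ (n+1)‖₊ : ℝ≥0∞) ^ ((1:ℝ) / (n+1))) ^ (n+1)
        = (‖K ^ (n+1)‖₊ : ℝ≥0∞) := by
      rw [← ENNReal.rpow_natCast (((‖K ^ (n+1)‖₊ : ℝ≥0∞)) ^ ((1:ℝ) / (n+1))) (n+1),
        ← ENNReal.rpow_mul]
      have : (1:ℝ) / (n+1) * ((n+1 : ℕ) : ℝ) = 1 := by
        push_cast
        field_simp
      rw [this, ENNReal.rpow_one]
    rw [h3] at h2
    refine le_trans h2 ?_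
    rw [← enorm_eq_nnnorm, ← ofReal_norm]
    exact ENNReal.ofReal_le_ofReal (hnorm n)
  -- upper bound
  have hrI : spectralRadius ℝ K ≤ ENNReal.ofReal I := by
    by_contra hlt
    push_neg at hlt
    have hrfin : spectralRadius ℝ K ≠ ⊤ := by
      intro htop
      have h1 := hr_le 0
      rw [htop] at h1
      simp at h1
      exact ENNReal.mul_ne_top (measure_ne_top ν _) ENNReal.ofReal_ne_top h1
    set r := (spectralRadius ℝ K).toReal with hrdef
    have hsr : spectralRadius ℝ K = ENNReal.ofReal r := by
      rw [hrdef, ENNReal.ofReal_toReal hrfin]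
    have hr0 : 0 < r := by
      by_contra hr0
      push_neg at hr0
      have : spectralRadius ℝ K = 0 := by
        rw [hsr, ENNReal.ofReal_eq_zero.2 hr0]
      rw [this] at hlt
      exact (not_lt.2 zero_le) hlt
    have hIr : I < r := by
      rw [hsr] at hlt
      by_contra hIr
      push_neg at hIr
      exact (not_lt.2 (ENNReal.ofReal_le_ofReal hIr)) hlt
    set t := (I + r) / 2 with htdef
    have htI : I < t := by rw [htdef]; linarith
    have htr : t < r := by rw [htdef]; linarith
    have ht0 : 0 < t := lt_of_le_of_lt hInn htI
    have hkey : ∀ n : ℕ, t ^ (n+1) ≤ (ν Set.univ).toReal * C * I ^ n := by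
      intro n
      have h1 : ENNReal.ofReal (t ^ (n+1)) ≤ ENNReal.ofReal ((ν Set.univ).toReal * C * I ^ n) := by
        calc ENNReal.ofReal (t ^ (n+1)) = (ENNReal.ofReal t) ^ (n+1) :=
              ENNReal.ofReal_pow ht0.le (n+1)
          _ ≤ spectralRadius ℝ K ^ (n+1) := by
              refine pow_le_pow_left₀ zero_le ?_ (n+1)
              rw [hsr]
              exact ENNReal.ofReal_le_ofReal htr.le
          _ ≤ ENNReal.ofReal ((ν Set.univ).toReal * C * I ^ n) := hr_le n
      have hbnd : (0:ℝ) ≤ (ν Set.univ).toReal * C * I ^ n :=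
        mul_nonneg (mul_nonneg hνU hC0.le) (pow_nonneg hInn n)
      exact (ENNReal.ofReal_le_ofReal_iff hbnd).1 h1
    rcases eq_or_lt_of_le hInn with hI0 | hI0
    · have h1 := hkey 1
      rw [← hI0] at h1
      simp only [pow_one, mul_zero] at h1
      have h2 : (0:ℝ) < t ^ (1+1) := pow_pos ht0 _
      linarith
    · have hq : 1 < t / I := (one_lt_div hI0).2 htI
      obtain ⟨n, hn⟩ := pow_unbounded_of_one_lt ((ν Set.univ).toReal * C / t) hq
      have hIn : (0:ℝ) < I ^ n := pow_pos hI0 n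
      have h2 : (ν Set.univ).toReal * C < t * (t / I) ^ n := by
        rw [div_lt_iff₀ ht0] at hn
        calc (ν Set.univ).toReal * C < (t / I) ^ n * t := hn
          _ = t * (t / I) ^ n := by ring
      have h3 : t * (t / I) ^ n * I ^ n = t ^ (n+1) := by
        rw [div_pow, mul_assoc, div_mul_cancel₀ _ hIn.ne']
        ring
      have h4 : (ν Set.univ).toReal * C * I ^ n < t ^ (n+1) := by
        calc (ν Set.univ).toReal * C * I ^ n < t * (t / I) ^ n * I ^ n :=
              mul_lt_mul_of_pos_right h2 hIn
          _ = t ^ (n+1) := h3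
      linarith [hkey n]
  -- lower bound
  have hlow : ENNReal.ofReal (δ * I) ≤ spectralRadius ℝ K := by
    rcases eq_or_lt_of_le hInn with hI0 | hI0
    · rw [← hI0, mul_zero, ENNReal.ofReal_zero]
      exact zero_le
    · by_contra hlt
      push_neg at hlt
      set c := δ * I with hcdef
      have hc0 : 0 < c := mul_pos hδ0 hI0
      have hunit : ∀ μ : ℝ, c ≤ μ →
          IsUnit (algebraMap ℝ (lp (fun _ : Ω => ℝ) ⊤ →L[ℝ] lp (fun _ : Ω => ℝ) ⊤) μ - K) := by
        intro μ hμ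
        rw [← spectrum.notMem_iff]
        intro hmem'
        have h1 : (‖μ‖₊ : ℝ≥0∞) ≤ spectralRadius ℝ K :=
          le_iSup₂ (f := fun (k : ℝ) (_ : k ∈ spectrum ℝ K) => (‖k‖₊ : ℝ≥0∞)) μ hmem'
        have h2 : ENNReal.ofReal c ≤ (‖μ‖₊ : ℝ≥0∞) := by
          rw [← enorm_eq_nnnorm, ← ofReal_norm]
          exact ENNReal.ofReal_le_ofReal (hμ.trans (le_abs_self μ))
        exact absurd (le_trans h2 h1) (not_le.2 hlt)
      exact (keyLower ev K hKposE k hknnE x₀ hx₀E c hTkE hunit).elim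
  refine ⟨hlow, hrI, ?_⟩
  constructor
  · intro hr
    rcases eq_or_lt_of_le hInn with hI0 | hI0
    · exfalso
      rw [← hI0, ENNReal.ofReal_zero, le_zero_iff] at hrI
      rw [hrI] at hr
      exact lt_irrefl _ hr
    · exact hI0
  · intro hI0
    calc (0 : ℝ≥0∞) < ENNReal.ofReal (δ * I) := ENNReal.ofReal_pos.2 (mul_pos hδ0 hI0)
      _ ≤ spectralRadius ℝ K := hlow
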